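/- Let S ⊂ ℝ be a subring finitely generated as a ℤ-module with field of fractions K, let Γ ⊂ ℝⁿ be a free S-module of rank n spanning ℝⁿ with S-basis {γ₁,…,γₙ}. If ⟨γᵢ,γⱼ⟩/⟨γₖ,γₖ⟩ ∈ K for all 1 ≤ i,j,k ≤ n, then for every non-zero γ ∈ Γ the reflection ρ_γ is a coincidence isometry of Γ. -/

import Mathlib

open Matrix

/-- Two additive subgroups of `ℝⁿ` are commensurate if their intersection has
finite index in both. -/
def Commensurate {n : ℕ} (Γ Γ' : AddSubgroup (Fin n → ℝ)) : Prop :=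
  (Γ'.addSubgroupOf Γ).index ≠ 0 ∧ (Γ.addSubgroupOf Γ').index ≠ 0

/-- The matrix of the reflection `ρ_γ : x ↦ x - 2(⟨x,γ⟩/⟨γ,γ⟩)γ` along `γ`. -/
noncomputable def reflMatrix {n : ℕ} (γ : Fin n → ℝ) : Matrix (Fin n) (Fin n) ℝ :=
  1 - (2 / dotProduct γ γ) • Matrix.vecMulVec γ γ

/-- `Q` (acting on `ℝⁿ` by `x ↦ Q.mulVec x`) is a coincidence isometry of `Γ`:
it is orthogonal and `Γ` is commensurate with its image `Q(Γ)`. -/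
def IsCoincidenceIsometry {n : ℕ} (Γ : AddSubgroup (Fin n → ℝ))
    (Q : Matrix (Fin n) (Fin n) ℝ) : Prop :=
  Q ∈ Matrix.orthogonalGroup (Fin n) ℝ ∧
    Commensurate Γ (Γ.map Q.mulVecLin.toAddMonoidHom)

/-- `Q` is a product of at most `n` reflections along non-zero elements of `Γ`. -/
def IsProdOfAtMostNCoincReflections {n : ℕ} (Γ : AddSubgroup (Fin n → ℝ))
    (Q : Matrix (Fin n) (Fin n) ℝ) : Prop :=
  ∃ k : ℕ, k ≤ n ∧ ∃ g : Fin k → (Fin n → ℝ), (∀ i, g i ∈ Γ ∧ g i ≠ 0) ∧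
    Q = (List.ofFn fun i => reflMatrix (g i)).prod

/-- `b` is an `S`-basis of `Γ` which is also an `ℝ`-basis of `ℝⁿ`; i.e. `Γ` is
a free `S`-module of rank `n` spanning `ℝⁿ` with basis `b`. -/
def IsSBasisOf {n : ℕ} (S : Subring ℝ) (b : Fin n → (Fin n → ℝ))
    (Γ : AddSubgroup (Fin n → ℝ)) : Prop :=
  LinearIndependent ℝ b ∧ Submodule.span ℝ (Set.range b) = ⊤ ∧
    ∀ x, x ∈ Γ ↔ ∃ c : Fin n → ℝ, (∀ i, c i ∈ S) ∧ x = ∑ i, c i • b i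

/- ## Auxiliary lemmas -/

lemma vecMulVec_sq {n : ℕ} (γ : Fin n → ℝ) :
    vecMulVec γ γ * vecMulVec γ γ = (γ ⬝ᵥ γ) • vecMulVec γ γ := by
  ext i j
  simp only [mul_apply, vecMulVec_apply, Matrix.smul_apply, dotProduct, smul_eq_mul,
    Finset.sum_mul, Finset.mul_sum]
  apply Finset.sum_congr rfl; intro k _; ring

lemma reflMatrix_mul_self {n : ℕ} {γ : Fin n → ℝ} (hγ : γ ⬝ᵥ γ ≠ 0) :
    reflMatrix γ * reflMatrix γ = 1 := by
  unfold reflMatrix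
  rw [sub_mul, one_mul, mul_sub, mul_one, Matrix.smul_mul, Matrix.mul_smul,
    vecMulVec_sq, smul_smul, smul_smul]
  have : 2 / (γ ⬝ᵥ γ) * (2 / (γ ⬝ᵥ γ)) * (γ ⬝ᵥ γ) = 2 / (γ ⬝ᵥ γ) + 2 / (γ ⬝ᵥ γ) := by
    field_simp; ring
  rw [this]
  module

lemma reflMatrix_star {n : ℕ} (γ : Fin n → ℝ) : star (reflMatrix γ) = reflMatrix γ := by
  ext i j
  rw [Matrix.star_apply, star_trivial]
  simp only [reflMatrix, Matrix.sub_apply, Matrix.smul_apply, vecMulVec_apply, one_apply, smul_eq_mul]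
  by_cases hij : i = j
  · subst hij; ring_nf
  · simp only [if_neg hij, if_neg (Ne.symm hij)]; ring

lemma reflMatrix_mem_orth {n : ℕ} {γ : Fin n → ℝ} (hγ : γ ⬝ᵥ γ ≠ 0) :
    reflMatrix γ ∈ Matrix.orthogonalGroup (Fin n) ℝ := by
  rw [Matrix.mem_orthogonalGroup_iff, ← Matrix.conjTranspose_eq_transpose_of_trivial,
    ← Matrix.star_eq_conjTranspose, reflMatrix_star, reflMatrix_mul_self hγ]

lemma reflMatrix_mulVec {n : ℕ} (γ x : Fin n → ℝ) :
    reflMatrix γ *ᵥ x = x - (2 / (γ ⬝ᵥ γ) * (γ ⬝ᵥ x)) • γ := by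
  funext i
  simp only [reflMatrix, mulVec, dotProduct, Matrix.sub_apply, Matrix.smul_apply, vecMulVec_apply,
    one_apply, smul_eq_mul, Pi.sub_apply, Pi.smul_apply, sub_mul,
    Finset.sum_sub_distrib, Finset.mul_sum]
  congr 1
  · simp [Finset.sum_ite_eq' Finset.univ i, mul_comm]
  · rw [Finset.sum_mul]
    apply Finset.sum_congr rfl; intro k _; ring

lemma dot_sum_right {n m : ℕ} (v : Fin n → ℝ) (c : Fin m → ℝ) (w : Fin m → Fin n → ℝ) :
    v ⬝ᵥ (∑ j, c j • w j) = ∑ j, c j * (v ⬝ᵥ w j) := by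
  simp only [dotProduct, Finset.sum_apply, Pi.smul_apply, smul_eq_mul, Finset.mul_sum]
  rw [Finset.sum_comm]
  apply Finset.sum_congr rfl; intro j _
  apply Finset.sum_congr rfl; intro i _; ring

lemma aeval_mem_subring {S : Subring ℝ} {d : ℝ} (hdS : d ∈ S) (q : Polynomial ℤ) :
    Polynomial.aeval d q ∈ S := by
  have this2 := Polynomial.aeval_algHom_apply (S.subtype.toIntAlgHom) (⟨d, hdS⟩ : S) q
  simp only [RingHom.toIntAlgHom_apply] at this2
  have h2 : S.subtype (⟨d, hdS⟩ : S) = d := rfl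
  rw [h2] at this2
  rw [this2]
  exact (Polynomial.aeval (⟨d, hdS⟩ : S) q).2

lemma exists_int_factor {S : Subring ℝ} (hS : Module.Finite ℤ S) {d : ℝ} (hdS : d ∈ S)
    (hd : d ≠ 0) : ∃ (m : ℤ) (e : ℝ), m ≠ 0 ∧ e ∈ S ∧ (m : ℝ) = d * e := by
  have hint : IsIntegral ℤ (⟨d, hdS⟩ : S) := by
    have : Algebra.IsIntegral ℤ S := Algebra.IsIntegral.of_finite ℤ S
    exact this.isIntegral _
  obtain ⟨p, hmon, hp0⟩ := hint
  have hp : Polynomial.aeval d p = 0 := by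
    have this2 := Polynomial.aeval_algHom_apply (S.subtype.toIntAlgHom) (⟨d, hdS⟩ : S) p
    simp only [RingHom.toIntAlgHom_apply] at this2
    have h2 : S.subtype (⟨d, hdS⟩ : S) = d := rfl
    rw [h2] at this2
    rw [this2]
    have : (Polynomial.aeval (⟨d, hdS⟩ : S)) p = 0 := hp0
    rw [this]; simp
  clear hp0
  have key : ∀ N (p : Polynomial ℤ), p.natDegree ≤ N → p.Monic → Polynomial.aeval d p = 0 →
      ∃ (m : ℤ) (e : ℝ), m ≠ 0 ∧ e ∈ S ∧ (m : ℝ) = d * e := by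
    intro N
    induction N with
    | zero =>
      intro p hdeg hm hp
      exfalso
      have : p = 1 := hm.natDegree_eq_zero.mp (Nat.le_zero.mp hdeg)
      rw [this] at hp; simp at hp
    | succ N ih =>
      intro p hdeg hm hp
      have hdecomp : Polynomial.aeval d p.divX * d + ((p.coeff 0 : ℤ) : ℝ) = 0 := by
        have h1 : Polynomial.aeval d (p.divX * Polynomial.X + Polynomial.C (p.coeff 0)) = 0 := by
          rw [Polynomial.divX_mul_X_add]; exact hp
        simpa using h1
      by_cases h0 : p.coeff 0 = 0
      · have hdeg1 : p.natDegree ≠ 0 := by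
          intro hz
          have : p = 1 := hm.natDegree_eq_zero.mp hz
          rw [this] at h0; simp at h0
        have hdx0 : Polynomial.aeval d p.divX = 0 := by
          rw [h0] at hdecomp
          push_cast at hdecomp
          rcases mul_eq_zero.mp (by linarith : Polynomial.aeval d p.divX * d = 0) with h | h
          · exact h
          · exact absurd h hd
        have hmon' : p.divX.Monic := by
          unfold Polynomial.Monic Polynomial.leadingCoeff
          rw [Polynomial.natDegree_divX_eq_natDegree_tsub_one, Polynomial.coeff_divX]
          rw [Nat.sub_add_cancel (Nat.one_le_iff_ne_zero.mpr hdeg1)]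
          exact hm
        exact ih p.divX (by
          rw [Polynomial.natDegree_divX_eq_natDegree_tsub_one]
          omega) hmon' hdx0
      · refine ⟨p.coeff 0, -(Polynomial.aeval d p.divX), h0, ?_, ?_⟩
        · exact neg_mem (aeval_mem_subring hdS _)
        · push_cast at hdecomp ⊢
          linarith
  exact key p.natDegree p le_rfl hmon hp

lemma index_ne_zero_of_zsmul_mem {G : Type*} [AddCommGroup G] (Γ H : AddSubgroup G)
    (hΓ : AddGroup.FG ↥Γ) (m : ℤ) (hm : m ≠ 0)
    (hsub : ∀ x ∈ Γ, m • x ∈ H) : (H.addSubgroupOf Γ).index ≠ 0 := by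
  set K := H.addSubgroupOf Γ
  haveI : AddGroup.FG ↥Γ := hΓ
  haveI : Finite (↥Γ ⧸ K) := by
    apply AddCommGroup.finite_of_fg_torsion
    intro x
    induction x using QuotientAddGroup.induction_on with
    | H g =>
      refine isOfFinAddOrder_iff_zsmul_eq_zero.mpr ⟨m, hm, ?_⟩
      rw [← QuotientAddGroup.mk_zsmul]
      rw [QuotientAddGroup.eq_zero_iff]
      exact hsub g.1 g.2
  exact AddSubgroup.index_ne_zero_of_finite

lemma gamma_fg {n : ℕ} (S : Subring ℝ) (hS : Module.Finite ℤ S)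
    (Γ : AddSubgroup (Fin n → ℝ)) (b : Fin n → (Fin n → ℝ))
    (hmem : ∀ x, x ∈ Γ ↔ ∃ c : Fin n → ℝ, (∀ i, c i ∈ S) ∧ x = ∑ i, c i • b i) :
    AddGroup.FG ↥Γ := by
  let ψ : (Fin n → S) →ₗ[ℤ] (Fin n → ℝ) :=
    { toFun := fun c => ∑ i, (c i : ℝ) • b i
      map_add' := by
        intro c c'
        rw [← Finset.sum_add_distrib]
        apply Finset.sum_congr rfl
        intro i _
        simp [add_smul]
      map_smul' := by
        intro z c
        simp only [RingHom.id_apply]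
        rw [Finset.smul_sum]
        apply Finset.sum_congr rfl
        intro i _
        simp only [Pi.smul_apply]
        push_cast
        exact smul_assoc z _ _ }
  have hrange : LinearMap.range ψ = AddSubgroup.toIntSubmodule Γ := by
    ext x
    rw [LinearMap.mem_range]
    have hxx : x ∈ AddSubgroup.toIntSubmodule Γ ↔ x ∈ Γ := Iff.rfl
    rw [hxx, hmem]
    constructor
    · rintro ⟨c, rfl⟩
      exact ⟨fun i => (c i : ℝ), fun i => (c i).2, rfl⟩
    · rintro ⟨c, hc, rfl⟩
      exact ⟨fun i => ⟨c i, hc i⟩, rfl⟩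
  haveI : Module.Finite ℤ ↥(AddSubgroup.toIntSubmodule Γ) := by
    rw [← hrange]
    exact Module.Finite.range ψ
  have : Module.Finite ℤ ↥Γ := this
  exact Module.Finite.iff_addGroup_fg.mp this

lemma map_fg {n : ℕ} (Γ : AddSubgroup (Fin n → ℝ)) (hΓ : AddGroup.FG ↥Γ)
    (f : (Fin n → ℝ) →+ (Fin n → ℝ)) : AddGroup.FG ↥(Γ.map f) := by
  haveI := hΓ
  exact AddGroup.fg_of_surjective (f.addSubgroupMap_surjective Γ)

lemma exists_common_denom (S : Subring ℝ) (K : Subfield ℝ)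
    (hK : ∀ x : ℝ, x ∈ K ↔ ∃ a b : ℝ, a ∈ S ∧ b ∈ S ∧ b ≠ 0 ∧ x = a / b)
    {m : ℕ} (f : Fin m → ℝ) (hf : ∀ j, f j ∈ K) :
    ∃ d : ℝ, d ∈ S ∧ d ≠ 0 ∧ ∀ j, d * f j ∈ S := by
  choose a den h1 h2 h3 h4 using fun j => (hK (f j)).mp (hf j)
  refine ⟨∏ j, den j, Subring.prod_mem S (fun j _ => h2 j), ?_, ?_⟩
  · rw [Finset.prod_ne_zero_iff]
    exact fun j _ => h3 j
  · intro j
    have hsplit : ∏ i, den i = den j * ∏ i ∈ Finset.univ.erase j, den i :=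
      (Finset.mul_prod_erase Finset.univ den (Finset.mem_univ j)).symm
    have : (∏ i, den i) * f j = a j * ∏ i ∈ Finset.univ.erase j, den i := by
      rw [hsplit, h4 j]
      field_simp [h3 j]
    rw [this]
    exact mul_mem (h1 j) (Subring.prod_mem S (fun i _ => h2 i))

theorem stmt15 {n : ℕ} (S : Subring ℝ) (hS : Module.Finite ℤ S)
    (K : Subfield ℝ)
    (hK : ∀ x : ℝ, x ∈ K ↔ ∃ a b : ℝ, a ∈ S ∧ b ∈ S ∧ b ≠ 0 ∧ x = a / b)
    (Γ : AddSubgroup (Fin n → ℝ)) (b : Fin n → (Fin n → ℝ)) (hb : IsSBasisOf S b Γ)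
    (h : ∀ i j k, dotProduct (b i) (b j) / dotProduct (b k) (b k) ∈ K) :
    ∀ γ ∈ Γ, γ ≠ 0 → IsCoincidenceIsometry Γ (reflMatrix γ) := by
  obtain ⟨hli, hspan, hmem⟩ := hb
  intro γ hγ hγ0
  have hgg : γ ⬝ᵥ γ ≠ 0 := fun hc => hγ0 (dotProduct_self_eq_zero.mp hc)
  -- S is stable under scalar multiplication on Γ
  have hSstab : ∀ s, s ∈ S → ∀ x ∈ Γ, s • x ∈ Γ := by
    intro s hs x hx
    obtain ⟨c, hc, rfl⟩ := (hmem x).mp hx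
    refine (hmem _).mpr ⟨fun i => s * c i, fun i => mul_mem hs (hc i), ?_⟩
    rw [Finset.smul_sum]
    apply Finset.sum_congr rfl
    intro i _
    rw [smul_smul]
  have hSK : ∀ x, x ∈ S → x ∈ K := fun x hx =>
    (hK x).mpr ⟨x, 1, hx, one_mem S, one_ne_zero, (div_one x).symm⟩
  -- coefficients of γ
  obtain ⟨s, hsS, hγeq⟩ := (hmem γ).mp hγ
  -- a nonzero coordinate index
  obtain ⟨i₀, hi₀⟩ := Function.ne_iff.mp hγ0
  have hbne : b i₀ ≠ 0 := hli.ne_zero i₀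
  have hg₀ : b i₀ ⬝ᵥ b i₀ ≠ 0 := fun hc => hbne (dotProduct_self_eq_zero.mp hc)
  -- the coefficients t j of the reflection
  set t : Fin n → ℝ := fun j => 2 / (γ ⬝ᵥ γ) * (b j ⬝ᵥ γ) with ht
  have hdotK : ∀ j, (b j ⬝ᵥ γ) / (b i₀ ⬝ᵥ b i₀) ∈ K := by
    intro j
    have : b j ⬝ᵥ γ = ∑ i, s i * (b j ⬝ᵥ b i) := by
      rw [hγeq, dot_sum_right]
    rw [this, Finset.sum_div]
    apply Subfield.sum_mem
    intro i _
    rw [mul_div_assoc]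
    exact mul_mem (hSK _ (hsS i)) (h j i i₀)
  have hggK : (γ ⬝ᵥ γ) / (b i₀ ⬝ᵥ b i₀) ∈ K := by
    have : γ ⬝ᵥ γ = ∑ i, s i * (b i ⬝ᵥ γ) := by
      nth_rewrite 2 [hγeq]
      rw [dot_sum_right]
      exact Finset.sum_congr rfl fun i _ => by rw [dotProduct_comm γ (b i)]
    rw [this, Finset.sum_div]
    apply Subfield.sum_mem
    intro i _
    rw [mul_div_assoc]
    exact mul_mem (hSK _ (hsS i)) (hdotK i)
  have h2K : (2 : ℝ) ∈ K := by
    have : (2 : ℝ) ∈ S := by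
      rw [show (2 : ℝ) = 1 + 1 by norm_num]
      exact add_mem (one_mem S) (one_mem S)
    exact hSK _ this
  have htK : ∀ j, t j ∈ K := by
    intro j
    have heq : t j = 2 * ((b j ⬝ᵥ γ) / (b i₀ ⬝ᵥ b i₀)) / ((γ ⬝ᵥ γ) / (b i₀ ⬝ᵥ b i₀)) := by
      rw [ht]
      field_simp
    rw [heq]
    exact div_mem (mul_mem h2K (hdotK j)) hggK
  obtain ⟨d, hdS, hd0, hdt⟩ := exists_common_denom S K hK t htK
  -- the key: d • ρ_γ(x) ∈ Γ for x ∈ Γ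
  have hB : ∀ x ∈ Γ, d • (reflMatrix γ *ᵥ x) ∈ Γ := by
    intro x hx
    obtain ⟨c, hc, hxeq⟩ := (hmem x).mp hx
    have hdot : 2 / (γ ⬝ᵥ γ) * (γ ⬝ᵥ x) = ∑ j, c j * t j := by
      rw [hxeq, dot_sum_right, Finset.mul_sum]
      apply Finset.sum_congr rfl
      intro j _
      rw [dotProduct_comm γ (b j)]
      simp only [ht]
      ring
    rw [reflMatrix_mulVec, hdot, smul_sub, smul_smul]
    apply sub_mem (hSstab d hdS x hx)
    have : d * ∑ j, c j * t j = ∑ j, c j * (d * t j) := by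
      rw [Finset.mul_sum]
      apply Finset.sum_congr rfl
      intro j _
      ring
    rw [this]
    exact hSstab _ (Subring.sum_mem S (fun j _ => mul_mem (hc j) (hdt j))) γ hγ
  obtain ⟨m, e, hm0, heS, hme⟩ := exists_int_factor hS hdS hd0
  have hmB : ∀ x ∈ Γ, (m : ℝ) • (reflMatrix γ *ᵥ x) ∈ Γ := by
    intro x hx
    have : (m : ℝ) • (reflMatrix γ *ᵥ x) = e • (d • (reflMatrix γ *ᵥ x)) := by
      rw [smul_smul, mul_comm e d, ← hme]
    rw [this]
    exact hSstab e heS _ (hB x hx)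
  have hRR : ∀ x, reflMatrix γ *ᵥ (reflMatrix γ *ᵥ x) = x := by
    intro x
    rw [mulVec_mulVec, reflMatrix_mul_self hgg, one_mulVec]
  have hfgΓ : AddGroup.FG ↥Γ := gamma_fg S hS Γ b hmem
  set Γ' := Γ.map (reflMatrix γ).mulVecLin.toAddMonoidHom with hΓ'
  have hfgΓ' : AddGroup.FG ↥Γ' := map_fg Γ hfgΓ _
  have happ : ∀ y, (reflMatrix γ).mulVecLin.toAddMonoidHom y = reflMatrix γ *ᵥ y :=
    fun y => rfl
  refine ⟨reflMatrix_mem_orth hgg, ?_, ?_⟩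
  · apply index_ne_zero_of_zsmul_mem Γ Γ' hfgΓ m hm0
    intro x hx
    have hz : m • x = (m : ℝ) • x := by
      rw [← Int.cast_smul_eq_zsmul ℝ m x]
    rw [hz, hΓ']
    refine AddSubgroup.mem_map.mpr ⟨(m : ℝ) • (reflMatrix γ *ᵥ x), hmB x hx, ?_⟩
    rw [happ, mulVec_smul, hRR]
  · apply index_ne_zero_of_zsmul_mem Γ' Γ hfgΓ' m hm0
    intro y hy
    rw [hΓ'] at hy
    obtain ⟨x, hx, rfl⟩ := AddSubgroup.mem_map.mp hy
    have hz : m • ((reflMatrix γ).mulVecLin.toAddMonoidHom x)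
        = (m : ℝ) • (reflMatrix γ *ᵥ x) := by
      rw [happ, ← Int.cast_smul_eq_zsmul ℝ m]
    rw [hz]
    exact hmB x hx
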